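/- If A ∈ F_q^{a×n} has rank a and B ∈ F_{q^m}^{b×n} is a parity-check matrix of an [n, n−b] MRD code with b ≤ n − a (so every nonzero vector in the F_{q^m}-row span of B has F_q-rank at least n − b + 1), then the stacked matrix [A; B] has F_{q^m}-rank a + b. -/

import Mathlib

/-- The `F_q`-rank of a vector `v ∈ F_{q^m}^n` with respect to a fixed basis `β`. -/
noncomputable def rankq (Fq F : Type*) [Field Fq] [Field F] [Algebra Fq F]
    {m n : ℕ} (β : Module.Basis (Fin m) Fq F) (a : Fin n → F) : ℕ :=
  (Matrix.of fun (i : Fin m) (j : Fin n) => β.repr (a j) i).rank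

lemma rows_li_of_rank {K : Type*} [Field K] {r n : ℕ} (M : Matrix (Fin r) (Fin n) K)
    (h : M.rank = r) : LinearIndependent K M := by
  show LinearIndependent K M.row
  rw [linearIndependent_iff_card_eq_finrank_span, Set.finrank,
    ← Matrix.rank_eq_finrank_span_row, h, Fintype.card_fin]

/-- If `A ∈ F_q^{a×n}` has rank `a` and `B ∈ F_{q^m}^{b×n}` is a parity-check
matrix of an `[n, n−b]` MRD code with `b ≤ n − a` (so `B` has rank `b` and every nonzero
vector in the `F_{q^m}`-row span of `B` has `F_q`-rank at least `n − b + 1`), then the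
stacked matrix `[A; B]` has `F_{q^m}`-rank `a + b`. -/
theorem stacked_mrd_parities_full_rank (Fq F : Type*) [Field Fq] [Fintype Fq]
    [Field F] [Fintype F] [Algebra Fq F]
    (m n a b : ℕ) (hnm : n ≤ m) (hb : b ≤ n - a)
    (β : Module.Basis (Fin m) Fq F)
    (A : Matrix (Fin a) (Fin n) Fq) (hA : A.rank = a)
    (B : Matrix (Fin b) (Fin n) F) (hBrank : B.rank = b)
    (hMRD : ∀ v : Fin n → F, v ∈ Submodule.span F (Set.range B) → v ≠ 0 →
      n - b + 1 ≤ rankq Fq F β v) :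
    (Matrix.fromRows (A.map (algebraMap Fq F)) B).rank = a + b := by
  classical
  set A' := A.map (algebraMap Fq F) with hA'def
  have hAn : a ≤ n := by
    have := A.rank_le_card_width
    rw [hA, Fintype.card_fin] at this
    exact this
  have han : a ≤ n - b := by omega
  have hAli : LinearIndependent Fq A := rows_li_of_rank A hA
  have hBli : LinearIndependent F B := rows_li_of_rank B hBrank
  -- key computation: coordinates of a combination of rows of A'
  have key : ∀ (x : Fin a → F) (j : Fin n) (k : Fin m),
      β.repr ((∑ i, x i • A' i) j) k = ∑ i, β.repr (x i) k * A i j := by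
    intro x j k
    have h1 : (∑ i, x i • A' i) j = ∑ i, A i j • x i := by
      rw [Finset.sum_apply]
      refine Finset.sum_congr rfl fun i _ => ?_
      simp [A', Algebra.smul_def, mul_comm, Matrix.map_apply]
    rw [h1, map_sum]
    simp [mul_comm]
  -- rows of A' are linearly independent over F
  have hA'li : LinearIndependent F A' := by
    refine Fintype.linearIndependent_iff.mpr ?_
    intro x hx i
    have hc : ∀ k : Fin m, β.repr (x i) k = 0 := by
      intro k
      have hsum : ∑ i', (fun i'' => β.repr (x i'') k) i' • A i' = 0 := by
        funext j
        have := key x j k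
        rw [hx] at this
        simp only [Pi.zero_apply, map_zero, Finsupp.coe_zero] at this
        rw [Finset.sum_apply]
        simpa [smul_eq_mul] using this.symm
      exact (Fintype.linearIndependent_iff.mp hAli) _ hsum i
    have hrepr : β.repr (x i) = 0 := Finsupp.ext hc
    have := β.repr.injective (by simp [hrepr] : β.repr (x i) = β.repr 0)
    exact this
  -- any vector in the F-span of rows of A' has small rankq
  have hsmall : ∀ w : Fin n → F, w ∈ Submodule.span F (Set.range A') →
      rankq Fq F β w ≤ a := by
    intro w hw
    obtain ⟨x, hx⟩ := Submodule.mem_span_range_iff_exists_fun F |>.mp hw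
    have hEq : (Matrix.of fun (k : Fin m) (j : Fin n) => β.repr (w j) k) =
        (Matrix.of fun (k : Fin m) (i : Fin a) => β.repr (x i) k) * A := by
      ext k j
      rw [← hx]
      simpa [Matrix.mul_apply] using key x j k
    rw [rankq, hEq]
    calc ((Matrix.of fun (k : Fin m) (i : Fin a) => β.repr (x i) k) * A).rank
        ≤ A.rank := Matrix.rank_mul_le_right _ _
      _ = a := hA
  -- spans are disjoint
  have hdisj : Disjoint (Submodule.span F (Set.range A'))
      (Submodule.span F (Set.range B)) := by
    rw [Submodule.disjoint_def]
    intro w hw1 hw2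
    by_contra hne
    have h1 := hMRD w hw2 hne
    have h2 := hsmall w hw1
    omega
  have hli : LinearIndependent F (Sum.elim A' B) := hA'li.sum_type hBli hdisj
  have hli' : LinearIndependent F (Matrix.fromRows A' B) := hli
  rw [hli'.rank_matrix (M := Matrix.fromRows A' B), Fintype.card_sum, Fintype.card_fin, Fintype.card_fin]
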